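/- Let m ≥ 1, let M, N ⊆ [m] with ∅ ≠ M ⊊ [m], and let D = aΔ_M^c + cΔ_N ⊆ E^m. Then the binary Gray image Φ(C^L_D) is an F₂-linear code of length (2^m−2^{|M|})·2^{|N|+1}, with 2^{2m} codewords (F₂-dimension 2m), and minimum nonzero Hamming weight (2^m−2^{|M|})·2^{|N|−1} (i.e. 2^{m+|N|−1}−2^{|M|+|N|−1}). Moreover, if |M|+|N| ≥ 3, then Φ(C^L_D) is self-orthogonal. -/

import Mathlib

open Finset

/-- The simplicial complex `Δ_M ⊆ 𝔽₂^m` generated by `M ⊆ [m]`: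
all vectors whose support is contained in `M`. -/
def deltaC {m : ℕ} (M : Finset (Fin m)) : Finset (Fin m → ZMod 2) :=
  Finset.univ.filter (fun w => ∀ i, w i ≠ 0 → i ∈ M)

/-- Dot product over `𝔽₂`. -/
def dotp {m : ℕ} (x y : Fin m → ZMod 2) : ZMod 2 := ∑ i, x i * y i

/-- The Gray map on a single element `a·s + c·t ↔ (s, t)` of `E = 𝔽₂ × 𝔽₂`:
`Φ(as + ct) = (t, s + t)`. -/
def grayPair (e : ZMod 2 × ZMod 2) : Fin 2 → ZMod 2 := ![e.2, e.1 + e.2]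

/-- The left codeword `c^L_D(v)` for `v = aα + cβ ↔ (α, β)`:
its coordinate at `d = (t₁, t₂) ∈ D` is `a(α·t₁) + c(β·t₁) ↔ (α·t₁, β·t₁)`. -/
def cwL {m : ℕ} (Ds : Finset ((Fin m → ZMod 2) × (Fin m → ZMod 2)))
    (v : (Fin m → ZMod 2) × (Fin m → ZMod 2)) :
    {d // d ∈ Ds} → ZMod 2 × ZMod 2 :=
  fun d => (dotp v.1 d.1.1, dotp v.2 d.1.1)

/-- The Gray image `Φ(c^L_D(v)) ∈ 𝔽₂^{2|D|}` of the left codeword `c^L_D(v)`;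
its Hamming weight (`hammingNorm`) is the Lee weight of `c^L_D(v)`. -/
def gcwL {m : ℕ} (Ds : Finset ((Fin m → ZMod 2) × (Fin m → ZMod 2)))
    (v : (Fin m → ZMod 2) × (Fin m → ZMod 2)) :
    {d // d ∈ Ds} × Fin 2 → ZMod 2 :=
  fun x => grayPair (cwL Ds v x.1) x.2

/-- The right codeword `c^R_D(v)` for `v = aα + cβ ↔ (α, β)`:
its coordinate at `d = (t₁, t₂) ∈ D` is `a(t₁·α) + c(t₂·α) ↔ (t₁·α, t₂·α)`. -/
def cwR {m : ℕ} (Ds : Finset ((Fin m → ZMod 2) × (Fin m → ZMod 2)))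
    (v : (Fin m → ZMod 2) × (Fin m → ZMod 2)) :
    {d // d ∈ Ds} → ZMod 2 × ZMod 2 :=
  fun d => (dotp d.1.1 v.1, dotp d.1.2 v.1)

/-- The Gray image `Φ(c^R_D(v)) ∈ 𝔽₂^{2|D|}` of the right codeword `c^R_D(v)`;
its Hamming weight (`hammingNorm`) is the Lee weight of `c^R_D(v)`. -/
def gcwR {m : ℕ} (Ds : Finset ((Fin m → ZMod 2) × (Fin m → ZMod 2)))
    (v : (Fin m → ZMod 2) × (Fin m → ZMod 2)) :
    {d // d ∈ Ds} × Fin 2 → ZMod 2 :=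
  fun x => grayPair (cwR Ds v x.1) x.2


lemma z2_add_self (x : ZMod 2) : x + x = 0 := by
  have := CharTwo.add_self_eq_zero (R := ZMod 2) x
  exact this

lemma fun_add_self {m : ℕ} (x : Fin m → ZMod 2) : x + x = 0 := by
  funext k; exact z2_add_self _

def ev {m : ℕ} (i : Fin m) : Fin m → ZMod 2 := fun k => if k = i then 1 else 0

lemma dotp_ev {m : ℕ} (γ : Fin m → ZMod 2) (i : Fin m) : dotp γ (ev i) = γ i := by
  unfold dotp ev
  rw [Finset.sum_eq_single i]
  · simp
  · intro b _ hb; simp [hb]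
  · simp

lemma dotp_add_left {m : ℕ} (x y z : Fin m → ZMod 2) :
    dotp (x + y) z = dotp x z + dotp y z := by
  unfold dotp; rw [← Finset.sum_add_distrib]; exact Finset.sum_congr rfl (by intros; simp [add_mul])

lemma dotp_add_right {m : ℕ} (x y z : Fin m → ZMod 2) :
    dotp x (y + z) = dotp x y + dotp x z := by
  unfold dotp; rw [← Finset.sum_add_distrib]; exact Finset.sum_congr rfl (by intros; simp [mul_add])

lemma dotp_zero_left {m : ℕ} (z : Fin m → ZMod 2) : dotp 0 z = 0 := by
  unfold dotp; simp

lemma mem_deltaC {m : ℕ} {M : Finset (Fin m)} {w : Fin m → ZMod 2} :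
    w ∈ deltaC M ↔ ∀ i, w i ≠ 0 → i ∈ M := by
  unfold deltaC; simp

lemma card_deltaC {m : ℕ} (M : Finset (Fin m)) : (deltaC M).card = 2 ^ M.card := by
  have : (deltaC M).card = (Finset.univ : Finset ({i // i ∈ M} → ZMod 2)).card := by
    apply Finset.card_bij' (fun w _ => fun i => w i.1)
      (fun f _ => fun k => if h : k ∈ M then f ⟨k, h⟩ else 0)
    case hi => intros; exact Finset.mem_univ _
    case hj =>
      intro f _
      rw [mem_deltaC]
      intro i hi
      by_contra h
      simp [h] at hi
    case left_inv =>
      intro w hw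
      funext k
      by_cases h : k ∈ M
      · simp [h]
      · simp [h]
        rw [mem_deltaC] at hw
        by_contra hne
        exact h (hw k (Ne.symm hne))
    case right_inv =>
      intro f _
      funext i
      simp [i.2]
  rw [this, Finset.card_univ, Fintype.card_fun]
  simp

lemma z2_cases (x : ZMod 2) : x = 0 ∨ x = 1 := by fin_cases x <;> [exact Or.inl rfl; exact Or.inr rfl]

lemma count_flip {m : ℕ} (S : Finset (Fin m → ZMod 2)) (γ t0 : Fin m → ZMod 2)
    (h0 : dotp γ t0 = 1) (hS : ∀ t ∈ S, t + t0 ∈ S) :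
    2 * (S.filter (fun t => dotp γ t ≠ 0)).card = S.card := by
  have key : (S.filter (fun t => ¬ dotp γ t ≠ 0)).card
      = (S.filter (fun t => dotp γ t ≠ 0)).card := by
    apply Finset.card_bij' (fun t _ => t + t0) (fun t _ => t + t0)
    case hi =>
      intro t ht
      simp only [Finset.mem_filter, not_not] at ht ⊢
      refine ⟨hS t ht.1, ?_⟩
      rw [dotp_add_right, ht.2, h0, zero_add]
      exact one_ne_zero
    case hj =>
      intro t ht
      simp only [Finset.mem_filter, not_not] at ht ⊢
      refine ⟨hS t ht.1, ?_⟩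
      rw [dotp_add_right, h0]
      rcases z2_cases (dotp γ t) with h | h
      · exact absurd h ht.2
      · rw [h]; decide
    case left_inv =>
      intro t _; rw [add_assoc, fun_add_self, add_zero]
    case right_inv =>
      intro t _; rw [add_assoc, fun_add_self, add_zero]
  have := Finset.card_filter_add_card_filter_not (s := S)
    (fun t => dotp γ t ≠ 0)
  omega

lemma count_univ {m : ℕ} (γ : Fin m → ZMod 2) (hγ : γ ≠ 0) :
    2 * ((Finset.univ : Finset (Fin m → ZMod 2)).filter (fun t => dotp γ t ≠ 0)).card = 2 ^ m := by
  obtain ⟨i, hi⟩ : ∃ i, γ i ≠ 0 := by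
    by_contra h
    push_neg at h
    exact hγ (funext h)
  have h1 : γ i = 1 := (z2_cases (γ i)).resolve_left hi
  rw [count_flip _ γ (ev i) (by rw [dotp_ev, h1]) (fun t _ => Finset.mem_univ _)]
  rw [Finset.card_univ, Fintype.card_fun]
  simp

lemma deltaC_add_ev {m : ℕ} {M : Finset (Fin m)} {i : Fin m} (hiM : i ∈ M)
    {t : Fin m → ZMod 2} (ht : t ∈ deltaC M) : t + ev i ∈ deltaC M := by
  rw [mem_deltaC] at ht ⊢
  intro k hk
  by_cases h : k = i
  · exact h ▸ hiM
  · apply ht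
    simpa [ev, h] using hk

lemma count_delta {m : ℕ} (M : Finset (Fin m)) (γ : Fin m → ZMod 2)
    (i : Fin m) (hiM : i ∈ M) (hi : γ i ≠ 0) :
    2 * ((deltaC M).filter (fun t => dotp γ t ≠ 0)).card = 2 ^ M.card := by
  have h1 : γ i = 1 := (z2_cases (γ i)).resolve_left hi
  rw [count_flip _ γ (ev i) (by rw [dotp_ev, h1]) (fun t ht => deltaC_add_ev hiM ht)]
  exact card_deltaC M

lemma count_delta_zero {m : ℕ} (M : Finset (Fin m)) (γ : Fin m → ZMod 2)
    (h : ∀ i ∈ M, γ i = 0) :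
    ((deltaC M).filter (fun t => dotp γ t ≠ 0)).card = 0 := by
  rw [Finset.card_eq_zero, Finset.filter_eq_empty_iff]
  intro t ht
  rw [mem_deltaC] at ht
  simp only [not_not]
  unfold dotp
  apply Finset.sum_eq_zero
  intro k _
  by_cases hk : t k = 0
  · rw [hk, mul_zero]
  · rw [h k (ht k hk), zero_mul]

lemma filter_split {m : ℕ} (M : Finset (Fin m)) (p : (Fin m → ZMod 2) → Prop)
    [DecidablePred p] :
    ((Finset.univ : Finset (Fin m → ZMod 2)).filter p).card
      = ((deltaC M).filter p).card + (((deltaC M)ᶜ).filter p).card := by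
  rw [← Finset.card_union_of_disjoint, ← Finset.filter_union, Finset.union_compl]
  exact Finset.disjoint_filter_filter disjoint_compl_right

-- new material
lemma gcwL_apply0 {m : ℕ} (Ds : Finset ((Fin m → ZMod 2) × (Fin m → ZMod 2)))
    (v : (Fin m → ZMod 2) × (Fin m → ZMod 2)) (d : {d // d ∈ Ds}) :
    gcwL Ds v (d, 0) = dotp v.2 d.1.1 := rfl

lemma gcwL_apply1 {m : ℕ} (Ds : Finset ((Fin m → ZMod 2) × (Fin m → ZMod 2)))
    (v : (Fin m → ZMod 2) × (Fin m → ZMod 2)) (d : {d // d ∈ Ds}) :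
    gcwL Ds v (d, 1) = dotp (v.1 + v.2) d.1.1 := by
  show dotp v.1 d.1.1 + dotp v.2 d.1.1 = _
  rw [dotp_add_left]

lemma eq_of_add_eq_zero_fun {m : ℕ} {x y : Fin m → ZMod 2} (h : x + y = 0) : x = y := by
  have : x + y + y = 0 + y := by rw [h]
  rwa [add_assoc, fun_add_self, add_zero, zero_add] at this

lemma dotp_eq_zero_forall {m : ℕ} {M : Finset (Fin m)} (hMu : M ≠ Finset.univ)
    (γ : Fin m → ZMod 2) (h : ∀ t ∈ (deltaC M)ᶜ, dotp γ t = 0) : γ = 0 := by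
  obtain ⟨j, hj⟩ : ∃ j, j ∉ M := by
    by_contra hc
    push_neg at hc
    exact hMu (Finset.eq_univ_iff_forall.mpr hc)
  have hej : ev j ∈ (deltaC M)ᶜ := by
    rw [Finset.mem_compl, mem_deltaC]
    push_neg
    exact ⟨j, by simp [ev], hj⟩
  have hγj : γ j = 0 := by rw [← dotp_ev γ j]; exact h _ hej
  funext i
  show γ i = 0
  by_cases hij : i = j
  · rw [hij]; exact hγj
  · have hmem : ev i + ev j ∈ (deltaC M)ᶜ := by
      rw [Finset.mem_compl, mem_deltaC]
      push_neg
      refine ⟨j, ?_, hj⟩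
      show ev i j + ev j j ≠ 0
      simp [ev, Ne.symm hij]
    have h2 := h _ hmem
    rw [dotp_add_right, dotp_ev, dotp_ev, hγj, add_zero] at h2
    exact h2

lemma gcwL_injective {m : ℕ} (M N : Finset (Fin m)) (hMu : M ≠ Finset.univ)
    (Ds : Finset ((Fin m → ZMod 2) × (Fin m → ZMod 2)))
    (hDs : Ds = (deltaC M)ᶜ ×ˢ deltaC N) :
    Function.Injective (gcwL Ds) := by
  intro v w hvw
  have h0N : (0 : Fin m → ZMod 2) ∈ deltaC N := by rw [mem_deltaC]; intro i hi; simp at hi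
  have key : ∀ t ∈ (deltaC M)ᶜ, dotp v.2 t = dotp w.2 t ∧ dotp (v.1 + v.2) t = dotp (w.1 + w.2) t := by
    intro t ht
    have hd : (t, (0 : Fin m → ZMod 2)) ∈ Ds := by
      rw [hDs, Finset.mem_product]; exact ⟨ht, h0N⟩
    constructor
    · have := congrFun hvw (⟨(t, 0), hd⟩, 0)
      rwa [gcwL_apply0, gcwL_apply0] at this
    · have := congrFun hvw (⟨(t, 0), hd⟩, 1)
      rwa [gcwL_apply1, gcwL_apply1] at this
  have h2 : v.2 = w.2 := by
    apply eq_of_add_eq_zero_fun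
    apply dotp_eq_zero_forall hMu
    intro t ht
    rw [dotp_add_left, (key t ht).1, z2_add_self]
  have h1 : v.1 = w.1 := by
    apply eq_of_add_eq_zero_fun
    apply dotp_eq_zero_forall hMu
    intro t ht
    have := (key t ht).2
    rw [dotp_add_left, dotp_add_left, (key t ht).1] at this
    have h' : dotp v.1 t = dotp w.1 t := by
      have := congrArg (· + dotp w.2 t) this
      simpa [add_assoc, z2_add_self] using this
    rw [dotp_add_left, h', z2_add_self]
  exact Prod.ext h1 h2

lemma weight_formula {m : ℕ} (M N : Finset (Fin m))
    (Ds : Finset ((Fin m → ZMod 2) × (Fin m → ZMod 2)))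
    (hDs : Ds = (deltaC M)ᶜ ×ˢ deltaC N)
    (v : (Fin m → ZMod 2) × (Fin m → ZMod 2)) :
    hammingNorm (gcwL Ds v)
      = 2 ^ N.card *
        ((((deltaC M)ᶜ).filter (fun t => dotp v.2 t ≠ 0)).card
          + (((deltaC M)ᶜ).filter (fun t => dotp (v.1 + v.2) t ≠ 0)).card) := by
  unfold hammingNorm
  rw [Finset.card_filter, Fintype.sum_prod_type]
  have step1 : ∀ d : {d // d ∈ Ds},
      (∑ j : Fin 2, if gcwL Ds v (d, j) ≠ 0 then 1 else 0)
        = ((if dotp v.2 d.1.1 ≠ 0 then 1 else 0) + (if dotp (v.1 + v.2) d.1.1 ≠ 0 then 1 else 0)) := by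
    intro d
    rw [Fin.sum_univ_two, gcwL_apply0, gcwL_apply1]
  rw [Finset.sum_congr rfl (fun d _ => step1 d)]
  rw [Finset.sum_coe_sort Ds (fun d => (if dotp v.2 d.1 ≠ 0 then 1 else 0) + (if dotp (v.1 + v.2) d.1 ≠ 0 then 1 else 0))]
  rw [hDs, Finset.sum_product]
  have step2 : ∀ t1 ∈ (deltaC M)ᶜ,
      (∑ t2 ∈ deltaC N, ((if dotp v.2 (t1, t2).1 ≠ 0 then 1 else 0) + (if dotp (v.1 + v.2) (t1, t2).1 ≠ 0 then 1 else 0)))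
        = 2 ^ N.card * ((if dotp v.2 t1 ≠ 0 then 1 else 0) + (if dotp (v.1 + v.2) t1 ≠ 0 then 1 else 0)) := by
    intro t1 _
    dsimp only
    rw [Finset.sum_const_nat (m := (if dotp v.2 t1 ≠ 0 then 1 else 0) + (if dotp (v.1 + v.2) t1 ≠ 0 then 1 else 0)) (fun _ _ => rfl), card_deltaC]
  rw [Finset.sum_congr rfl step2, ← Finset.mul_sum]
  congr 1
  rw [Finset.sum_add_distrib, ← Finset.card_filter, ← Finset.card_filter]

lemma pow_two_split {k : ℕ} (hk : 1 ≤ k) : 2 ^ k = 2 * 2 ^ (k - 1) := by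
  conv_lhs => rw [show k = (k - 1) + 1 by omega]
  rw [pow_succ]; ring

lemma W_lower {m : ℕ} (hm : 1 ≤ m) (M : Finset (Fin m)) (hMc : 1 ≤ M.card) (hle : M.card ≤ m)
    (γ : Fin m → ZMod 2) (hγ : γ ≠ 0) :
    2 ^ (m - 1) - 2 ^ (M.card - 1) ≤ (((deltaC M)ᶜ).filter (fun t => dotp γ t ≠ 0)).card := by
  have h1 := count_univ γ hγ
  have h2 : 2 * ((deltaC M).filter (fun t => dotp γ t ≠ 0)).card ≤ 2 ^ M.card := by
    by_cases h : ∃ i ∈ M, γ i ≠ 0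
    · obtain ⟨i, hiM, hi⟩ := h
      rw [count_delta M γ i hiM hi]
    · push_neg at h
      rw [count_delta_zero M γ h]
      positivity
  have h3 := filter_split M (fun t => dotp γ t ≠ 0)
  have e1 := pow_two_split hm
  have e2 := pow_two_split hMc
  omega

lemma W_exact {m : ℕ} (hm : 1 ≤ m) (M : Finset (Fin m)) (hle : M.card ≤ m)
    (i : Fin m) (hiM : i ∈ M) :
    (((deltaC M)ᶜ).filter (fun t => dotp (ev i) t ≠ 0)).card
      = 2 ^ (m - 1) - 2 ^ (M.card - 1) := by
  have hev : (ev i : Fin m → ZMod 2) ≠ 0 := by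
    intro h
    have := congrFun h i
    simp [ev] at this
  have hMc : 1 ≤ M.card := Finset.card_pos.mpr ⟨i, hiM⟩
  have h1 := count_univ (ev i) hev
  have h2 := count_delta M (ev i) i hiM (by simp [ev])
  have h3 := filter_split M (fun t => dotp (ev i) t ≠ 0)
  have e1 := pow_two_split hm
  have e2 := pow_two_split hMc
  have hpow : (2:ℕ) ^ (M.card - 1) ≤ 2 ^ (m - 1) := Nat.pow_le_pow_right (by norm_num) (by omega)
  omega

lemma sum_tt {m : ℕ} (M : Finset (Fin m)) (h3 : 3 ≤ M.card) (i j : Fin m) :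
    ∑ t ∈ (deltaC M)ᶜ, t i * t j = 0 := by
  obtain ⟨k, hkM, hki, hkj⟩ : ∃ k ∈ M, k ≠ i ∧ k ≠ j := by
    by_contra hc
    push_neg at hc
    have hsub : M ⊆ {i, j} := by
      intro k hk
      by_cases hki : k = i
      · simp [hki]
      · simp [hc k hk hki]
    have := Finset.card_le_card hsub
    have h2 : ({i, j} : Finset (Fin m)).card ≤ 2 := Finset.card_insert_le _ _ |>.trans (by simp)
    omega
  have gmem : ∀ t ∈ (deltaC M)ᶜ, t + ev k ∈ (deltaC M)ᶜ := by
    intro t ht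
    rw [Finset.mem_compl] at ht ⊢
    intro hmem
    apply ht
    have := deltaC_add_ev hkM hmem
    rwa [add_assoc, fun_add_self, add_zero] at this
  apply Finset.sum_involution (fun t _ => t + ev k)
  · intro t ht
    have hi : (t + ev k) i = t i := by
      show t i + ev k i = t i
      simp [ev, Ne.symm hki]
    have hj : (t + ev k) j = t j := by
      show t j + ev k j = t j
      simp [ev, Ne.symm hkj]
    rw [hi, hj, z2_add_self]
  · intro t _ _ heq
    have := congrFun heq k
    simp [ev] at this
  · exact gmem
  · intro t ht
    rw [add_assoc, fun_add_self, add_zero]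

lemma sum_dotp_mul {m : ℕ} (M : Finset (Fin m)) (h3 : 3 ≤ M.card)
    (γ δ : Fin m → ZMod 2) :
    ∑ t ∈ (deltaC M)ᶜ, dotp γ t * dotp δ t = 0 := by
  have expand : ∀ t : Fin m → ZMod 2,
      dotp γ t * dotp δ t = ∑ i : Fin m, ∑ j : Fin m, γ i * δ j * (t i * t j) := by
    intro t
    rw [dotp, dotp, Finset.sum_mul_sum]
    exact Finset.sum_congr rfl fun i _ => Finset.sum_congr rfl fun j _ => by ring
  rw [Finset.sum_congr rfl fun t _ => expand t]
  rw [Finset.sum_comm]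
  apply Finset.sum_eq_zero
  intro i _
  rw [Finset.sum_comm]
  apply Finset.sum_eq_zero
  intro j _
  rw [← Finset.mul_sum, sum_tt M h3 i j, mul_zero]

lemma selforth {m : ℕ} (M N : Finset (Fin m)) (h3 : 3 ≤ M.card + N.card)
    (Ds : Finset ((Fin m → ZMod 2) × (Fin m → ZMod 2)))
    (hDs : Ds = (deltaC M)ᶜ ×ˢ deltaC N)
    (v w : (Fin m → ZMod 2) × (Fin m → ZMod 2)) :
    ∑ i, gcwL Ds v i * gcwL Ds w i = 0 := by
  rw [Fintype.sum_prod_type]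
  have step1 : ∀ d : {d // d ∈ Ds},
      (∑ j : Fin 2, gcwL Ds v (d, j) * gcwL Ds w (d, j))
        = dotp v.2 d.1.1 * dotp w.2 d.1.1
          + dotp (v.1 + v.2) d.1.1 * dotp (w.1 + w.2) d.1.1 := by
    intro d
    rw [Fin.sum_univ_two, gcwL_apply0, gcwL_apply0, gcwL_apply1, gcwL_apply1]
  rw [Finset.sum_congr rfl (fun d _ => step1 d)]
  rw [Finset.sum_coe_sort Ds
    (fun d => dotp v.2 d.1 * dotp w.2 d.1 + dotp (v.1 + v.2) d.1 * dotp (w.1 + w.2) d.1)]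
  rw [hDs, Finset.sum_product]
  have step2 : ∀ t1 ∈ (deltaC M)ᶜ,
      (∑ t2 ∈ deltaC N, (dotp v.2 (t1, t2).1 * dotp w.2 (t1, t2).1
          + dotp (v.1 + v.2) (t1, t2).1 * dotp (w.1 + w.2) (t1, t2).1))
        = (2 ^ N.card : ℕ) • (dotp v.2 t1 * dotp w.2 t1
          + dotp (v.1 + v.2) t1 * dotp (w.1 + w.2) t1) := by
    intro t1 _
    dsimp only
    rw [Finset.sum_const, card_deltaC]
  rw [Finset.sum_congr rfl step2]
  rcases Nat.eq_zero_or_pos N.card with hN | hN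
  · have hM3 : 3 ≤ M.card := by omega
    have : ∀ t1 ∈ (deltaC M)ᶜ,
        (2 ^ N.card : ℕ) • (dotp v.2 t1 * dotp w.2 t1
          + dotp (v.1 + v.2) t1 * dotp (w.1 + w.2) t1)
          = dotp v.2 t1 * dotp w.2 t1 + dotp (v.1 + v.2) t1 * dotp (w.1 + w.2) t1 := by
      intro t1 _
      rw [hN, pow_zero, one_smul]
    rw [Finset.sum_congr rfl this, Finset.sum_add_distrib,
      sum_dotp_mul M hM3, sum_dotp_mul M hM3, add_zero]
  · apply Finset.sum_eq_zero
    intro t1 _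
    rw [nsmul_eq_mul]
    have : ((2 ^ N.card : ℕ) : ZMod 2) = 0 := by
      rw [ZMod.natCast_eq_zero_iff]
      exact dvd_pow_self 2 (by omega)
    rw [this, zero_mul]

theorem stmt_6 {m : ℕ} (hm : 1 ≤ m) (M N : Finset (Fin m))
    (hM : M ≠ ∅) (hMu : M ≠ Finset.univ)
    (Ds : Finset ((Fin m → ZMod 2) × (Fin m → ZMod 2)))
    (hDs : Ds = (deltaC M)ᶜ ×ˢ deltaC N) :
    (2 * Ds.card = (2 ^ m - 2 ^ M.card) * 2 ^ (N.card + 1)) ∧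
    ((Finset.univ : Finset ((Fin m → ZMod 2) × (Fin m → ZMod 2))).image (gcwL Ds)).card = 2 ^ (2 * m) ∧
    (∀ v w : (Fin m → ZMod 2) × (Fin m → ZMod 2), ∃ z : (Fin m → ZMod 2) × (Fin m → ZMod 2), gcwL Ds z = gcwL Ds v + gcwL Ds w) ∧
    (∀ v : (Fin m → ZMod 2) × (Fin m → ZMod 2), gcwL Ds v ≠ 0 → 2 ^ (m + N.card - 1) - 2 ^ (M.card + N.card - 1) ≤ hammingNorm (gcwL Ds v)) ∧
    (∃ v : (Fin m → ZMod 2) × (Fin m → ZMod 2), gcwL Ds v ≠ 0 ∧ hammingNorm (gcwL Ds v) = 2 ^ (m + N.card - 1) - 2 ^ (M.card + N.card - 1)) ∧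
    (3 ≤ M.card + N.card →
      ∀ v w : (Fin m → ZMod 2) × (Fin m → ZMod 2), ∑ i, gcwL Ds v i * gcwL Ds w i = 0) := by
  have hMc : 1 ≤ M.card := Finset.card_pos.mpr (Finset.nonempty_iff_ne_empty.mpr hM)
  have hMlt : M.card < m := by
    have h := Finset.card_lt_card (Finset.ssubset_univ_iff.mpr hMu)
    simpa using h
  have hcard : Fintype.card (Fin m → ZMod 2) = 2 ^ m := by
    rw [Fintype.card_fun]
    simp
  have epow : 2 ^ N.card * (2 ^ (m - 1) - 2 ^ (M.card - 1))
      = 2 ^ (m + N.card - 1) - 2 ^ (M.card + N.card - 1) := by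
    rw [Nat.mul_sub, ← pow_add, ← pow_add,
      show N.card + (m - 1) = m + N.card - 1 by omega,
      show N.card + (M.card - 1) = M.card + N.card - 1 by omega]
  refine ⟨?_, ?_, ?_, ?_, ?_, ?_⟩
  · -- length
    rw [hDs, Finset.card_product, Finset.card_compl, card_deltaC, card_deltaC, hcard, pow_succ]
    ring
  · -- number of codewords
    rw [Finset.card_image_of_injective _ (gcwL_injective M N hMu Ds hDs), Finset.card_univ,
      Fintype.card_prod, hcard, two_mul, pow_add]
  · -- linearity
    intro v w
    refine ⟨v + w, ?_⟩
    funext x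
    obtain ⟨d, j⟩ := x
    fin_cases j
    · show gcwL Ds (v + w) (d, 0) = (gcwL Ds v + gcwL Ds w) (d, 0)
      rw [Pi.add_apply, gcwL_apply0, gcwL_apply0, gcwL_apply0]
      exact dotp_add_left v.2 w.2 d.1.1
    · show gcwL Ds (v + w) (d, 1) = (gcwL Ds v + gcwL Ds w) (d, 1)
      rw [Pi.add_apply, gcwL_apply1, gcwL_apply1, gcwL_apply1]
      show dotp ((v.1 + w.1) + (v.2 + w.2)) d.1.1 = _
      rw [dotp_add_left, dotp_add_left, dotp_add_left, dotp_add_left, dotp_add_left]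
      ring
  · -- lower bound on weight
    intro v hv
    have hnz : v.2 ≠ 0 ∨ v.1 + v.2 ≠ 0 := by
      by_contra h
      push_neg at h
      apply hv
      have h1 : v.1 = 0 := by
        have h2 := h.2
        rw [h.1, add_zero] at h2
        exact h2
      funext x
      obtain ⟨d, j⟩ := x
      fin_cases j
      · show gcwL Ds v (d, 0) = (0 : {d // d ∈ Ds} × Fin 2 → ZMod 2) (d, 0)
        rw [gcwL_apply0, h.1, dotp_zero_left]; rfl
      · show gcwL Ds v (d, 1) = (0 : {d // d ∈ Ds} × Fin 2 → ZMod 2) (d, 1)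
        rw [gcwL_apply1, h.1, h1, add_zero, dotp_zero_left]; rfl
    rw [weight_formula M N Ds hDs v, ← epow]
    apply Nat.mul_le_mul_left
    rcases hnz with h | h
    · exact le_trans (W_lower hm M hMc (le_of_lt hMlt) v.2 h) (Nat.le_add_right _ _)
    · exact le_trans (W_lower hm M hMc (le_of_lt hMlt) (v.1 + v.2) h) (Nat.le_add_left _ _)
  · -- weight achieved
    obtain ⟨i, hiM⟩ := Finset.nonempty_iff_ne_empty.mpr hM
    have hW0 : (((deltaC M)ᶜ).filter (fun t => dotp ((ev i, ev i).1 + (ev i, ev i).2) t ≠ 0)).card = 0 := by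
      rw [Finset.card_eq_zero, Finset.filter_eq_empty_iff]
      intro t _
      show ¬ dotp (ev i + ev i) t ≠ 0
      rw [fun_add_self, dotp_zero_left]
      simp
    have hval : hammingNorm (gcwL Ds (ev i, ev i)) = 2 ^ (m + N.card - 1) - 2 ^ (M.card + N.card - 1) := by
      rw [weight_formula M N Ds hDs (ev i, ev i), hW0, add_zero]
      show 2 ^ N.card * (((deltaC M)ᶜ).filter (fun t => dotp (ev i) t ≠ 0)).card = _
      rw [W_exact hm M (le_of_lt hMlt) i hiM, epow]
    have hpos : 0 < 2 ^ (m + N.card - 1) - 2 ^ (M.card + N.card - 1) := by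
      have := Nat.pow_lt_pow_right (a := 2) (by norm_num)
        (show M.card + N.card - 1 < m + N.card - 1 by omega)
      omega
    refine ⟨(ev i, ev i), ?_, hval⟩
    intro h0
    rw [h0, hammingNorm_zero] at hval
    omega
  · -- self-orthogonality
    intro h3 v w
    exact selforth M N h3 Ds hDs v w
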